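/- Let r and n be integers with 1 ≤ r ≤ n and r dividing n, and let k ≥ 2. If F_1, F_2, ..., F_k are graphs on a common vertex set of size n, each of which is the vertex-disjoint union of n/r copies of the complete graph K_r, then the simultaneous domination number of F_1, ..., F_k is at most (1 − ((r−1)/r)^{k−1}) · n. -/

import Mathlib

/-- The simultaneous domination number of factors `F 0, …, F (k-1)` on a common
finite vertex set: the minimum cardinality of a set `S` that is a dominating set
in every factor. -/
noncomputable def simDomNum {V : Type*} [Fintype V] {k : ℕ}
    (F : Fin k → SimpleGraph V) : ℕ :=
  sInf {m | ∃ S : Finset V, (∀ i, ∀ v ∉ S, ∃ u ∈ S, (F i).Adj v u) ∧ S.card = m}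

/-- `G` is the vertex-disjoint union of copies of `K_r`: the vertex set is
partitioned into blocks of size `r`, and two vertices are adjacent iff they are
distinct and lie in a common block. -/
def IsUnionCliques {V : Type*} [Fintype V] [DecidableEq V]
    (G : SimpleGraph V) (r : ℕ) : Prop :=
  ∃ P : Finpartition (Finset.univ : Finset V),
    (∀ b ∈ P.parts, b.card = r) ∧
    ∀ u v : V, G.Adj u v ↔ (u ≠ v ∧ ∃ b ∈ P.parts, u ∈ b ∧ v ∈ b)

/-- In an equipartition into parts of size `r`, the number of parts times `r`
is the number of vertices. -/
lemma parts_card_mul {V : Type*} [Fintype V] [DecidableEq V] {r : ℕ}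
    (P : Finpartition (Finset.univ : Finset V)) (hP : ∀ b ∈ P.parts, b.card = r) :
    P.parts.card * r = Fintype.card V := by
  rw [← Finset.card_univ, ← P.sum_card_parts, Finset.sum_congr rfl hP]
  simp [Finset.sum_const, mul_comm]

/-- One greedy extension step: extend `S` to meet every part of `P`, shrinking
the complement by a factor of at most `(r-1)/r`. -/
lemma greedy_step {V : Type*} [Fintype V] [DecidableEq V] {r : ℕ} (hr : 1 ≤ r)
    (P : Finpartition (Finset.univ : Finset V)) (hP : ∀ b ∈ P.parts, b.card = r)
    (S : Finset V) :
    ∃ S' : Finset V, S ⊆ S' ∧ (∀ b ∈ P.parts, ∃ u ∈ S', u ∈ b) ∧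
      (r - 1) * (Finset.univ \ S).card ≤ r * (Finset.univ \ S').card := by
  classical
  set bad := P.parts.filter (fun b => Disjoint b S) with hbad
  have hne : ∀ b ∈ bad, b.Nonempty := by
    intro b hb
    have hc := hP b (Finset.mem_filter.mp hb).1
    rw [← Finset.card_pos, hc]; omega
  choose g hg using hne
  refine ⟨S ∪ bad.attach.image (fun b => g b.1 b.2), Finset.subset_union_left, ?_, ?_⟩
  · intro b hb
    by_cases hd : Disjoint b S
    · have hbbad : b ∈ bad := Finset.mem_filter.mpr ⟨hb, hd⟩
      exact ⟨g b hbbad, Finset.mem_union_right _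
        (Finset.mem_image.mpr ⟨⟨b, hbbad⟩, Finset.mem_attach _ _, rfl⟩), hg b hbbad⟩
    · obtain ⟨u, hu1, hu2⟩ := Finset.not_disjoint_iff.mp hd
      exact ⟨u, Finset.mem_union_left _ hu2, hu1⟩
  · -- counting
    set T := bad.attach.image (fun b => g b.1 b.2) with hT
    set c := (Finset.univ \ S).card with hc
    set c' := (Finset.univ \ (S ∪ T)).card with hc'
    have hm : T.card ≤ bad.card := Finset.card_image_le.trans (by simp)
    -- each bad part is inside the complement of S
    have hrm : r * bad.card ≤ c := by
      have hdisj : (bad : Set (Finset V)).PairwiseDisjoint id :=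
        P.disjoint.subset (by intro b hb; exact (Finset.mem_filter.mp hb).1)
      have hcard : (bad.biUnion id).card = ∑ b ∈ bad, b.card :=
        Finset.card_biUnion (fun x hx y hy hxy => hdisj hx hy hxy)
      have hsum : ∑ b ∈ bad, b.card = bad.card * r := by
        rw [Finset.sum_congr rfl (fun b hb => hP b (Finset.mem_filter.mp hb).1)]
        rw [Finset.sum_const, smul_eq_mul]
      have hsub : bad.biUnion id ⊆ Finset.univ \ S := by
        intro v hv
        obtain ⟨b, hb, hvb⟩ := Finset.mem_biUnion.mp hv
        have hd := (Finset.mem_filter.mp hb).2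
        exact Finset.mem_sdiff.mpr ⟨Finset.mem_univ _,
          fun hvS => (Finset.disjoint_left.mp hd hvb) hvS⟩
      calc r * bad.card = bad.card * r := mul_comm _ _
        _ = ∑ b ∈ bad, b.card := hsum.symm
        _ = (bad.biUnion id).card := hcard.symm
        _ ≤ c := Finset.card_le_card hsub
    -- complement shrinks by at most bad.card
    have hcc : c ≤ c' + bad.card := by
      have h1 : (Finset.univ \ S) \ T ⊆ Finset.univ \ (S ∪ T) := by
        intro v hv
        simp only [Finset.mem_sdiff, Finset.mem_union] at hv ⊢
        tauto
      have h2 : c ≤ ((Finset.univ \ S) \ T).card + T.card :=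
        Finset.card_le_card_sdiff_add_card
      have h3 := Finset.card_le_card h1
      omega
    have h4 : r * c ≤ r * c' + r * bad.card := by
      calc r * c ≤ r * (c' + bad.card) := Nat.mul_le_mul_left _ hcc
        _ = r * c' + r * bad.card := by ring
    have h5 : r * c ≤ r * c' + c := h4.trans (Nat.add_le_add_left hrm _)
    rw [Nat.sub_one_mul]
    exact Nat.sub_le_iff_le_add.mpr h5

/-- Greedy extension along a list of partitions. -/
lemma greedy_list {V : Type*} [Fintype V] [DecidableEq V] {r : ℕ} (hr : 1 ≤ r)
    (L : List (Finpartition (Finset.univ : Finset V)))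
    (hL : ∀ P ∈ L, ∀ b ∈ P.parts, b.card = r) (S : Finset V) :
    ∃ S' : Finset V, S ⊆ S' ∧ (∀ P ∈ L, ∀ b ∈ P.parts, ∃ u ∈ S', u ∈ b) ∧
      (r - 1) ^ L.length * (Finset.univ \ S).card
        ≤ r ^ L.length * (Finset.univ \ S').card := by
  induction L generalizing S with
  | nil => exact ⟨S, Finset.Subset.refl _, by simp, by simp⟩
  | cons Ph t ih =>
    obtain ⟨S1, hS1, hmeet1, hc1⟩ := greedy_step hr Ph (hL Ph List.mem_cons_self) S
    obtain ⟨S', hS', hmeet, hc⟩ := ih (fun Q hQ => hL Q (List.mem_cons_of_mem _ hQ)) S1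
    refine ⟨S', hS1.trans hS', ?_, ?_⟩
    · intro Q hQ
      rcases List.mem_cons.mp hQ with h | h
      · subst h
        intro b hb
        obtain ⟨u, hu, hub⟩ := hmeet1 b hb
        exact ⟨u, hS' hu, hub⟩
      · exact hmeet Q h
    · simp only [List.length_cons, pow_succ]
      calc (r - 1) ^ t.length * (r - 1) * (Finset.univ \ S).card
          = (r - 1) ^ t.length * ((r - 1) * (Finset.univ \ S).card) := by ring
        _ ≤ (r - 1) ^ t.length * (r * (Finset.univ \ S1).card) :=
            Nat.mul_le_mul_left _ hc1
        _ = r * ((r - 1) ^ t.length * (Finset.univ \ S1).card) := by ring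
        _ ≤ r * (r ^ t.length * (Finset.univ \ S').card) := Nat.mul_le_mul_left _ hc
        _ = r ^ t.length * r * (Finset.univ \ S').card := by ring

/-- Common transversal of two equipartitions into parts of size `r`, via Hall's
marriage theorem. -/
lemma common_transversal {V : Type*} [Fintype V] [DecidableEq V] {r : ℕ} (hr : 1 ≤ r)
    (P Q : Finpartition (Finset.univ : Finset V))
    (hP : ∀ b ∈ P.parts, b.card = r) (hQ : ∀ b ∈ Q.parts, b.card = r) :
    ∃ T : Finset V, r * T.card ≤ Fintype.card V ∧
      (∀ b ∈ P.parts, ∃ u ∈ T, u ∈ b) ∧ (∀ b ∈ Q.parts, ∃ u ∈ T, u ∈ b) := by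
  classical
  set t : {b // b ∈ P.parts} → Finset (Finset V) :=
    fun p => Q.parts.filter (fun q => (p.1 ∩ q).Nonempty) with ht
  have hall : ∀ s : Finset {b // b ∈ P.parts}, s.card ≤ (s.biUnion t).card := by
    intro s
    set A := s.biUnion (fun p => p.1) with hA
    set B := (s.biUnion t).biUnion id with hB
    have hAB : A ⊆ B := by
      intro v hv
      obtain ⟨p, hp, hvp⟩ := Finset.mem_biUnion.mp hv
      obtain ⟨q, hq, hvq⟩ := Q.exists_mem (Finset.mem_univ v)
      refine Finset.mem_biUnion.mpr ⟨q, Finset.mem_biUnion.mpr ⟨p, hp, ?_⟩, hvq⟩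
      exact Finset.mem_filter.mpr ⟨hq, ⟨v, Finset.mem_inter.mpr ⟨hvp, hvq⟩⟩⟩
    have hAcard : A.card = s.card * r := by
      have hcb : (s.biUnion fun p => (p.1 : Finset V)).card
          = ∑ p ∈ s, (p.1 : Finset V).card :=
        Finset.card_biUnion
          (fun x _ y _ hxy => P.disjoint x.2 y.2 (fun h => hxy (Subtype.ext h)))
      rw [hA, hcb, Finset.sum_congr rfl (fun p _ => hP p.1 p.2)]
      simp [Finset.sum_const, mul_comm]
    have hqr : ∀ q ∈ s.biUnion t, Finset.card q = r := by
      intro q hq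
      obtain ⟨p, _, hq'⟩ := Finset.mem_biUnion.mp hq
      exact hQ q (Finset.mem_filter.mp hq').1
    have hBcard : B.card ≤ (s.biUnion t).card * r := by
      calc B.card ≤ ∑ q ∈ s.biUnion t, q.card := Finset.card_biUnion_le
        _ = ∑ _q ∈ s.biUnion t, r := Finset.sum_congr rfl hqr
        _ = (s.biUnion t).card * r := by simp [Finset.sum_const, mul_comm]
    have h2 : s.card * r ≤ (s.biUnion t).card * r :=
      (hAcard ▸ Finset.card_le_card hAB).trans hBcard
    exact Nat.le_of_mul_le_mul_right h2 hr
  obtain ⟨f, hfinj, hf⟩ := (Finset.all_card_le_biUnion_card_iff_exists_injective t).mp hall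
  -- f is surjective onto Q.parts
  have hPQcard : P.parts.card = Q.parts.card :=
    Nat.eq_of_mul_eq_mul_right hr
      ((parts_card_mul P hP).trans (parts_card_mul Q hQ).symm)
  have himg : P.parts.attach.image f = Q.parts := by
    apply Finset.eq_of_subset_of_card_le
    · intro q hq
      obtain ⟨p, _, hpq⟩ := Finset.mem_image.mp hq
      exact hpq ▸ (Finset.mem_filter.mp (hf p)).1
    · rw [Finset.card_image_of_injective _ hfinj, Finset.card_attach, hPQcard]
  have hfn : ∀ p : {b // b ∈ P.parts}, (p.1 ∩ f p).Nonempty :=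
    fun p => (Finset.mem_filter.mp (hf p)).2
  choose g hg using hfn
  refine ⟨P.parts.attach.image g, ?_, ?_, ?_⟩
  · have h1 : (P.parts.attach.image g).card ≤ P.parts.card :=
      Finset.card_image_le.trans (by simp)
    calc r * (P.parts.attach.image g).card ≤ r * P.parts.card :=
          Nat.mul_le_mul_left _ h1
      _ = Fintype.card V := by rw [mul_comm]; exact parts_card_mul P hP
  · intro b hb
    exact ⟨g ⟨b, hb⟩, Finset.mem_image.mpr ⟨⟨b, hb⟩, Finset.mem_attach _ _, rfl⟩,
      (Finset.mem_inter.mp (hg ⟨b, hb⟩)).1⟩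
  · intro q hq
    rw [← himg] at hq
    obtain ⟨p, hp, hpq⟩ := Finset.mem_image.mp hq
    exact ⟨g p, Finset.mem_image.mpr ⟨p, Finset.mem_attach _ _, rfl⟩,
      hpq ▸ (Finset.mem_inter.mp (hg p)).2⟩

theorem stmt10 {V : Type*} [Fintype V] [DecidableEq V] {r n k : ℕ}
    (hr : 1 ≤ r) (hrn : r ≤ n) (hdvd : r ∣ n) (hn : Fintype.card V = n)
    (hk : 2 ≤ k) (F : Fin k → SimpleGraph V)
    (hF : ∀ i, IsUnionCliques (F i) r) :
    (simDomNum F : ℝ) ≤ (1 - (((r : ℝ) - 1) / r) ^ (k - 1)) * n := by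
  classical
  choose P hPcard hPadj using hF
  -- common transversal of the first two partitions
  obtain ⟨T, hTcard, hT0, hT1⟩ := common_transversal hr (P ⟨0, by omega⟩) (P ⟨1, by omega⟩)
    (hPcard _) (hPcard _)
  rw [hn] at hTcard
  -- greedy over the remaining k - 2 partitions
  set L : List (Finpartition (Finset.univ : Finset V)) :=
    ((List.range (k - 2)).attach).map
      (fun j => P ⟨j.1 + 2, by have := List.mem_range.mp j.2; omega⟩) with hLdef
  have hLlen : L.length = k - 2 := by simp [hLdef]
  have hLparts : ∀ Q ∈ L, ∀ b ∈ Q.parts, b.card = r := by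
    intro Q hQ
    obtain ⟨j, _, rfl⟩ := List.mem_map.mp hQ
    exact hPcard _
  obtain ⟨S, hTS, hSmeet, hSbound⟩ := greedy_list hr L hLparts T
  rw [hLlen] at hSbound
  -- S meets every part of every partition
  have hmeet : ∀ i : Fin k, ∀ b ∈ (P i).parts, ∃ u ∈ S, u ∈ b := by
    intro i b hb
    rcases lt_or_ge i.1 2 with h | h
    · rcases (by omega : i.1 = 0 ∨ i.1 = 1) with h' | h'
      · have hi : i = ⟨0, by omega⟩ := Fin.ext h'
        rw [hi] at hb
        obtain ⟨u, hu, hub⟩ := hT0 b hb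
        exact ⟨u, hTS hu, hub⟩
      · have hi : i = ⟨1, by omega⟩ := Fin.ext h'
        rw [hi] at hb
        obtain ⟨u, hu, hub⟩ := hT1 b hb
        exact ⟨u, hTS hu, hub⟩
    · have hi : i = ⟨(i.1 - 2) + 2, by omega⟩ :=
        Fin.ext (show i.1 = i.1 - 2 + 2 by omega)
      have hmem : P ⟨(i.1 - 2) + 2, by omega⟩ ∈ L := by
        rw [hLdef]
        exact List.mem_map.mpr
          ⟨⟨i.1 - 2, List.mem_range.mpr (by omega)⟩, List.mem_attach _ _, rfl⟩
      rw [hi] at hb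
      exact hSmeet _ hmem b hb
  -- S is a simultaneous dominating set
  have hdom : ∀ i, ∀ v ∉ S, ∃ u ∈ S, (F i).Adj v u := by
    intro i v hv
    obtain ⟨b, hb, hvb⟩ := (P i).exists_mem (Finset.mem_univ v)
    obtain ⟨u, huS, hub⟩ := hmeet i b hb
    refine ⟨u, huS, (hPadj i v u).mpr ⟨fun h => hv (h ▸ huS), b, hb, hvb, hub⟩⟩
  have hsd : simDomNum F ≤ S.card := Nat.sInf_le ⟨S, hdom, rfl⟩
  -- cardinality bound, in ℕ
  set c := (Finset.univ \ S).card with hcdef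
  have hScard : S.card ≤ n := hn ▸ Finset.card_le_univ S
  have hcompl : S.card + c = n := by
    have : c = n - S.card := by
      rw [hcdef, Finset.card_sdiff_of_subset (Finset.subset_univ S), Finset.card_univ, hn]
    omega
  have hTc : (Finset.univ \ T).card + T.card = n := by
    have hT1' : T.card ≤ n := hn ▸ Finset.card_le_univ T
    have : (Finset.univ \ T).card = n - T.card := by
      rw [Finset.card_sdiff_of_subset (Finset.subset_univ T), Finset.card_univ, hn]
    omega
  have h1 : (r - 1) * n ≤ r * (Finset.univ \ T).card := by
    have e1 : r * (Finset.univ \ T).card + r * T.card = r * n := by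
      rw [← Nat.mul_add, hTc]
    rw [Nat.sub_one_mul]
    omega
  have key : (r - 1) ^ (k - 1) * n ≤ r ^ (k - 1) * c := by
    have hk1 : k - 1 = (k - 2) + 1 := by omega
    rw [hk1, pow_succ, pow_succ]
    calc (r - 1) ^ (k - 2) * (r - 1) * n
        = (r - 1) ^ (k - 2) * ((r - 1) * n) := by ring
      _ ≤ (r - 1) ^ (k - 2) * (r * (Finset.univ \ T).card) := Nat.mul_le_mul_left _ h1
      _ = r * ((r - 1) ^ (k - 2) * (Finset.univ \ T).card) := by ring
      _ ≤ r * (r ^ (k - 2) * c) := Nat.mul_le_mul_left _ hSbound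
      _ = r ^ (k - 2) * r * c := by ring
  -- pass to the reals
  have hrpos : (0 : ℝ) < r := by exact_mod_cast hr
  have hcast : ((r : ℝ) - 1) ^ (k - 1) * n ≤ (r : ℝ) ^ (k - 1) * c := by
    have := key
    have h := (Nat.cast_le (α := ℝ)).mpr key
    push_cast [Nat.cast_sub hr] at h
    exact h
  have hfrac : (((r : ℝ) - 1) / r) ^ (k - 1) * n ≤ c := by
    rw [div_pow, div_mul_eq_mul_div, div_le_iff₀ (by positivity)]
    calc ((r : ℝ) - 1) ^ (k - 1) * n ≤ (r : ℝ) ^ (k - 1) * c := hcast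
      _ = c * (r : ℝ) ^ (k - 1) := by ring
  have hSreal : (S.card : ℝ) = n - c := by
    have := hcompl
    push_cast [← this]
    ring
  have hsdr : (simDomNum F : ℝ) ≤ (S.card : ℝ) := by exact_mod_cast hsd
  calc (simDomNum F : ℝ) ≤ (S.card : ℝ) := hsdr
    _ = n - c := hSreal
    _ ≤ (1 - (((r : ℝ) - 1) / r) ^ (k - 1)) * n := by nlinarith [hfrac]
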